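/- Let L > 0, β > 0, R ≥ 0, and let U : ℝ → ℝ be four times differentiable, not identically zero on [0, L], satisfying U⁗(x) = β⁴·U(x) for all x, the clamped conditions U(0) = 0 and U′(0) = 0, the zero-moment condition U″(L) = 0, and the end-mass shear condition U‴(L) = −R·L·β⁴·U(L). Then the frequency equation 1 + cos(βL)·cosh(βL) = R·βL·( sin(βL)·cosh(βL) − cos(βL)·sinh(βL) ) holds. -/

import Mathlib

set_option maxHeartbeats 1000000

/-- A combination of `cosh`, `sinh`, `cos`, `sin` composed with `β * x`. -/
noncomputable def tcomb (β A B C D x : ℝ) : ℝ :=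
  A * Real.cosh (β * x) + B * Real.sinh (β * x) + C * Real.cos (β * x) + D * Real.sin (β * x)

lemma tcomb_hasDerivAt (β A B C D x : ℝ) :
    HasDerivAt (tcomb β A B C D) (tcomb β (β * B) (β * A) (β * D) (-(β * C)) x) x := by
  have hx : HasDerivAt (fun x : ℝ => β * x) β x := by
    simpa using (hasDerivAt_id x).const_mul β
  have h1 := hx.cosh.const_mul A
  have h2 := hx.sinh.const_mul B
  have h3 := hx.cos.const_mul C
  have h4 := hx.sin.const_mul D
  have h := ((h1.add h2).add h3).add h4
  have hv : tcomb β (β * B) (β * A) (β * D) (-(β * C)) x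
      = A * (Real.sinh (β * x) * β) + B * (Real.cosh (β * x) * β)
        + C * (-Real.sin (β * x) * β) + D * (Real.cos (β * x) * β) := by
    simp [tcomb]; ring
  rw [hv]
  exact h

theorem stmt_12 (L β R : ℝ) (hL : 0 < L) (hβ : 0 < β) (hR : 0 ≤ R)
    (U : ℝ → ℝ) (hU : ∀ k ≤ 3, Differentiable ℝ (deriv^[k] U))
    (hODE : ∀ x, deriv^[4] U x = β ^ 4 * U x)
    (hc0 : U 0 = 0) (hc1 : deriv U 0 = 0)
    (hM : deriv^[2] U L = 0) (hV : deriv^[3] U L = -R * L * β ^ 4 * U L)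
    (hnontriv : ∃ x ∈ Set.Icc (0 : ℝ) L, U x ≠ 0) :
    1 + Real.cos (β * L) * Real.cosh (β * L) =
      R * (β * L) *
        (Real.sin (β * L) * Real.cosh (β * L) - Real.cos (β * L) * Real.sinh (β * L)) := by
  have hβ0 : β ≠ 0 := ne_of_gt hβ
  set a : ℝ := deriv^[2] U 0 with ha_def
  set b : ℝ := deriv^[3] U 0 with hb_def
  set A : ℝ := a / (2 * β ^ 2) with hA_def
  set B : ℝ := b / (2 * β ^ 3) with hB_def
  -- the explicit candidate solution and its first three derivatives
  set W0 : ℝ → ℝ := tcomb β A B (-A) (-B) with hW0_def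
  set W1 : ℝ → ℝ := tcomb β (β * B) (β * A) (β * -B) (-(β * -A)) with hW1_def
  set W2 : ℝ → ℝ := tcomb β (β * (β * A)) (β * (β * B)) (β * -(β * -A)) (-(β * (β * -B)))
    with hW2_def
  set W3 : ℝ → ℝ := tcomb β (β * (β * (β * B))) (β * (β * (β * A))) (β * -(β * (β * -B)))
    (-(β * (β * -(β * -A)))) with hW3_def
  have hW0' : ∀ x, HasDerivAt W0 (W1 x) x := by
    intro x; rw [hW0_def, hW1_def]; exact tcomb_hasDerivAt β _ _ _ _ x
  have hW1' : ∀ x, HasDerivAt W1 (W2 x) x := by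
    intro x; rw [hW1_def, hW2_def]; exact tcomb_hasDerivAt β _ _ _ _ x
  have hW2' : ∀ x, HasDerivAt W2 (W3 x) x := by
    intro x; rw [hW2_def, hW3_def]; exact tcomb_hasDerivAt β _ _ _ _ x
  have hW3' : ∀ x, HasDerivAt W3 (β ^ 4 * W0 x) x := by
    intro x
    rw [hW3_def]
    have h := tcomb_hasDerivAt β (β * (β * (β * B))) (β * (β * (β * A)))
      (β * -(β * (β * -B))) (-(β * (β * -(β * -A)))) x
    have hv : β ^ 4 * W0 x = tcomb β (β * (β * (β * (β * A)))) (β * (β * (β * (β * B))))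
        (β * -(β * (β * -(β * -A)))) (-(β * (β * -(β * (β * -B))))) x := by
      rw [hW0_def]; simp [tcomb]; ring
    rw [hv]
    exact h
  -- the differences p0..p3
  set p0 : ℝ → ℝ := fun x => U x - W0 x with hp0_def
  set p1 : ℝ → ℝ := fun x => deriv U x - W1 x with hp1_def
  set p2 : ℝ → ℝ := fun x => deriv^[2] U x - W2 x with hp2_def
  set p3 : ℝ → ℝ := fun x => deriv^[3] U x - W3 x with hp3_def
  have hUd0 : Differentiable ℝ U := by simpa using hU 0 (by norm_num)
  have hUd1 : Differentiable ℝ (deriv U) := by simpa using hU 1 (by norm_num)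
  have hUd2 : Differentiable ℝ (deriv^[2] U) := hU 2 (by norm_num)
  have hUd3 : Differentiable ℝ (deriv^[3] U) := hU 3 (by norm_num)
  have hstep : ∀ n : ℕ, ∀ x : ℝ, deriv (deriv^[n] U) x = deriv^[n+1] U x := by
    intro n x
    rw [Function.iterate_succ_apply' deriv n U]
  have hp0' : ∀ x, HasDerivAt p0 (p1 x) x := fun x =>
    ((hUd0 x).hasDerivAt).sub (hW0' x)
  have hp1' : ∀ x, HasDerivAt p1 (p2 x) x := by
    intro x
    have h := ((hU 1 (by norm_num)) x).hasDerivAt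
    rw [hstep 1 x] at h
    simp only [Function.iterate_one] at h
    exact h.sub (hW1' x)
  have hp2' : ∀ x, HasDerivAt p2 (p3 x) x := by
    intro x
    have h := (hUd2 x).hasDerivAt
    rw [hstep 2 x] at h
    exact h.sub (hW2' x)
  have hp3' : ∀ x, HasDerivAt p3 (β ^ 4 * p0 x) x := by
    intro x
    have h := (hUd3 x).hasDerivAt
    rw [hstep 3 x, hODE x] at h
    have := h.sub (hW3' x)
    refine this.congr_deriv ?_
    show _ = β ^ 4 * (U x - W0 x); ring
  -- initial conditions
  have hp00 : p0 0 = 0 := by simp [hp0_def, hW0_def, tcomb, hc0]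
  have hp10 : p1 0 = 0 := by simp [hp1_def, hW1_def, tcomb, hc1]
  have hW20 : W2 0 = a := by
    rw [hW2_def]
    simp only [tcomb, mul_zero, Real.cosh_zero, Real.sinh_zero, Real.cos_zero, Real.sin_zero,
      hA_def]
    field_simp
    ring
  have hW30 : W3 0 = b := by
    rw [hW3_def]
    simp only [tcomb, mul_zero, Real.cosh_zero, Real.sinh_zero, Real.cos_zero, Real.sin_zero,
      hA_def, hB_def]
    field_simp
    ring
  have hp20 : p2 0 = 0 := by
    rw [hp2_def]
    show deriv^[2] U 0 - W2 0 = 0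
    rw [hW20, ← ha_def, sub_self]
  have hp30 : p3 0 = 0 := by
    rw [hp3_def]
    show deriv^[3] U 0 - W3 0 = 0
    rw [hW30, ← hb_def, sub_self]
  -- energy function
  set h : ℝ → ℝ := fun x => β^6 * (p0 x)^2 + β^4 * (p1 x)^2 + β^2 * (p2 x)^2 + (p3 x)^2
    with hh_def
  have hh' : ∀ x, HasDerivAt h
      (β^6 * (2 * p0 x * p1 x) + β^4 * (2 * p1 x * p2 x) + β^2 * (2 * p2 x * p3 x)
        + 2 * p3 x * (β ^ 4 * p0 x)) x := by
    intro x
    have h0 := (((hp0' x).pow 2).const_mul (β^6))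
    have h1 := (((hp1' x).pow 2).const_mul (β^4))
    have h2 := (((hp2' x).pow 2).const_mul (β^2))
    have h3 := ((hp3' x).pow 2)
    have := ((h0.add h1).add h2).add h3
    refine this.congr_deriv ?_
    ring
  set g : ℝ → ℝ := fun x => h x * Real.exp (-(2*β) * x) with hg_def
  have hg' : ∀ x, HasDerivAt g
      ((β^6 * (2 * p0 x * p1 x) + β^4 * (2 * p1 x * p2 x) + β^2 * (2 * p2 x * p3 x)
        + 2 * p3 x * (β ^ 4 * p0 x)) * Real.exp (-(2*β) * x)
        + h x * (Real.exp (-(2*β) * x) * -(2*β))) x := by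
    intro x
    have he : HasDerivAt (fun x : ℝ => Real.exp (-(2*β) * x)) (Real.exp (-(2*β)*x) * -(2*β)) x := by
      have : HasDerivAt (fun x : ℝ => -(2*β) * x) (-(2*β)) x := by
        simpa using (hasDerivAt_id x).const_mul (-(2*β))
      exact this.exp
    exact (hh' x).mul he
  have hgderiv_nonpos : ∀ x : ℝ, deriv g x ≤ 0 := by
    intro x
    rw [(hg' x).deriv]
    have hexp : 0 < Real.exp (-(2*β) * x) := Real.exp_pos _
    have key : β^6 * (2 * p0 x * p1 x) + β^4 * (2 * p1 x * p2 x) + β^2 * (2 * p2 x * p3 x)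
        + 2 * p3 x * (β ^ 4 * p0 x) ≤ 2 * β * h x := by
      simp only [hh_def]
      nlinarith [sq_nonneg (β^3 * p0 x - β^2 * p1 x), sq_nonneg (β^2 * p1 x - β * p2 x),
        sq_nonneg (β * p2 x - p3 x), sq_nonneg (p3 x - β^3 * p0 x), hβ.le, sq_nonneg β,
        mul_pos hβ hβ]
    nlinarith [hexp, key, hβ]
  have hanti : AntitoneOn g (Set.Icc 0 L) := by
    apply antitoneOn_of_deriv_nonpos (convex_Icc 0 L)
    · exact fun x _ => (hg' x).continuousAt.continuousWithinAt
    · exact fun x _ => (hg' x).differentiableAt.differentiableWithinAt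
    · exact fun x _ => hgderiv_nonpos x
  have hg0 : g 0 = 0 := by simp [hg_def, hh_def, hp00, hp10, hp20, hp30]
  have hzero : ∀ x ∈ Set.Icc (0:ℝ) L, p0 x = 0 ∧ p1 x = 0 ∧ p2 x = 0 ∧ p3 x = 0 := by
    intro x hx
    have h1 : g x ≤ 0 := by
      have := hanti (Set.left_mem_Icc.2 hL.le) hx hx.1
      simpa [hg0] using this
    have hexp : 0 < Real.exp (-(2*β) * x) := Real.exp_pos _
    have h1' : h x * Real.exp (-(2*β) * x) ≤ 0 := by
      rw [hg_def] at h1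
      simpa using h1
    have hh0 : h x ≤ 0 := by
      by_contra hc
      push_neg at hc
      nlinarith [mul_pos hc hexp]
    have hhx : β ^ 6 * p0 x ^ 2 + β ^ 4 * p1 x ^ 2 + β ^ 2 * p2 x ^ 2 + p3 x ^ 2 ≤ 0 := by
      simpa [hh_def] using hh0
    have key : ∀ y c : ℝ, 0 < c → c * y ^ 2 ≤ 0 → y = 0 := by
      intro y c hc hcy
      have hy2 : y ^ 2 ≤ 0 := by nlinarith
      have h2 : y ^ 2 = 0 := le_antisymm hy2 (sq_nonneg y)
      exact sq_eq_zero_iff.mp h2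
    refine ⟨?_, ?_, ?_, ?_⟩
    · refine key _ _ (pow_pos hβ 6) ?_
      nlinarith [sq_nonneg (p1 x), sq_nonneg (p2 x), sq_nonneg (p3 x),
        pow_pos hβ 4, pow_pos hβ 2]
    · refine key _ _ (pow_pos hβ 4) ?_
      nlinarith [sq_nonneg (p0 x), sq_nonneg (p2 x), sq_nonneg (p3 x),
        pow_pos hβ 6, pow_pos hβ 2]
    · refine key _ _ (pow_pos hβ 2) ?_
      nlinarith [sq_nonneg (p0 x), sq_nonneg (p1 x), sq_nonneg (p3 x),
        pow_pos hβ 6, pow_pos hβ 4]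
    · refine key _ _ one_pos ?_
      nlinarith [sq_nonneg (p0 x), sq_nonneg (p1 x), sq_nonneg (p2 x),
        pow_pos hβ 6, pow_pos hβ 4, pow_pos hβ 2]
  have hLmem : L ∈ Set.Icc (0:ℝ) L := Set.right_mem_Icc.2 hL.le
  obtain ⟨hzL0, _, hzL2, hzL3⟩ := hzero L hLmem
  -- boundary equations for W
  have hUL : U L = W0 L := by have := hzL0; simp [hp0_def] at this; linarith
  have hE1 : W2 L = 0 := by
    have := hzL2; simp only [hp2_def] at this; rw [hM] at this; linarith
  have hE2 : W3 L = -R * L * β ^ 4 * W0 L := by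
    have := hzL3; simp only [hp3_def] at this
    rw [hV, hUL] at this; linarith
  -- nontriviality forces (a, b) ≠ 0
  have hab : a ≠ 0 ∨ b ≠ 0 := by
    by_contra hc
    push_neg at hc
    obtain ⟨x, hx, hUx⟩ := hnontriv
    have hA0 : A = 0 := by rw [hA_def, hc.1]; simp
    have hB0 : B = 0 := by rw [hB_def, hc.2]; simp
    have hW0x : W0 x = 0 := by simp [hW0_def, tcomb, hA0, hB0]
    have := (hzero x hx).1
    simp [hp0_def, hW0x] at this
    exact hUx this
  -- abbreviations for the trig values
  set ch := Real.cosh (β * L) with hch_def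
  set sh := Real.sinh (β * L) with hsh_def
  set c := Real.cos (β * L) with hc_def
  set s := Real.sin (β * L) with hs_def
  -- translate boundary equations into polynomial equations in a, b
  have E1 : a * β * (ch + c) + b * (sh + s) = 0 := by
    have h := hE1
    simp only [hW2_def, tcomb, hA_def, hB_def] at h
    field_simp at h
    have h8 : (8:ℝ) * β ^ 9 ≠ 0 := by positivity
    apply mul_left_cancel₀ h8
    linear_combination (8*β^9) * h
  have E2 : a * β * (sh - s + R * (β*L) * (ch - c)) + b * (ch + c + R * (β*L) * (sh - s)) = 0 := by
    have h := hE2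
    simp only [hW3_def, hW0_def, tcomb, hA_def, hB_def] at h
    field_simp at h
    have h8 : (128:ℝ) * β ^ 20 ≠ 0 := by positivity
    apply mul_left_cancel₀ h8
    linear_combination (128*β^20) * h
  set Dd : ℝ := (ch + c) * (ch + c + R*(β*L)*(sh - s)) - (sh + s) * (sh - s + R*(β*L)*(ch - c))
    with hDd_def
  have hDa : Dd * (a * β) = 0 := by
    rw [hDd_def]
    linear_combination (ch + c + R*(β*L)*(sh - s)) * E1 - (sh + s) * E2
  have hDb : Dd * b = 0 := by
    rw [hDd_def]
    linear_combination (ch + c) * E2 - (sh - s + R*(β*L)*(ch - c)) * E1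
  have hD0 : Dd = 0 := by
    rcases hab with ha | hb
    · have : a * β ≠ 0 := mul_ne_zero ha hβ0
      exact (mul_eq_zero.1 hDa).resolve_right this
    · exact (mul_eq_zero.1 hDb).resolve_right hb
  have hcosh : ch ^ 2 - sh ^ 2 = 1 := by
    rw [hch_def, hsh_def]; rw [Real.cosh_sq]; ring
  have hsin : s ^ 2 + c ^ 2 = 1 := by
    rw [hs_def, hc_def]; exact Real.sin_sq_add_cos_sq _
  have hD0' := hD0
  rw [hDd_def] at hD0'
  linear_combination hD0' / 2 - hcosh / 2 - hsin / 2
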